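/- Optimal n-step belief values are attained by observation-based policies: in a POMDP with reward function R and observable goal set G, for every n ∈ ℕ and every belief b over S with an observation, there exists an observation-based policy σ with V_n(b) = V_n^σ(b); consequently V_n(b) = sup over all observation-based policies σ of V_n^σ(b). -/

import Mathlib

open Finset

attribute [local instance] Classical.propDecidable

noncomputable section

/-- A belief over a finite type `S`: a nonnegative function summing to one. -/
def IsBelief {S : Type} [Fintype S] (b : S → ℝ) : Prop :=
  (∀ s, 0 ≤ b s) ∧ (∑ s, b s = 1)

/-- A belief clip for a belief `b`: `0 ≤ μ(s) ≤ b(s)` pointwise and `Σμ < 1`. -/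
def IsBeliefClip {S : Type} [Fintype S] (b μ : S → ℝ) : Prop :=
  (∀ s, 0 ≤ μ s ∧ μ s ≤ b s) ∧ (∑ s, μ s < 1)

/-- The induced function `b ⊖ μ`, defined by `(b ⊖ μ)(s) = (b(s) − μ(s)) / (1 − Σμ)`. -/
def clipped {S : Type} [Fintype S] (b μ : S → ℝ) : S → ℝ :=
  fun s => (b s - μ s) / (1 - ∑ s', μ s')

variable {S Act Z : Type}

/-- The set of actions enabled in state `s`: those whose outgoing probabilities sum to 1. -/
def enabledA [Fintype S] [Fintype Act] (P : S → Act → S → ℝ) (s : S) : Finset Act :=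
  univ.filter fun α => ∑ s' : S, P s α s' = 1

/-- The actions enabled at an observation `z`: `Act(z) = Act(s)` for some `s` with `O s = z`. -/
def obsEnabled [Fintype S] [Fintype Act] (O : S → Z) (P : S → Act → S → ℝ) (z : Z) :
    Finset Act :=
  if h : ∃ s, O s = z then enabledA P h.choose else ∅

/-- The POMDP assumptions on the observation function `O` and the transition function `P`:
nonnegative transition probabilities, each state-action row sums to 0 or 1, every state has
some enabled action, and equally-observed states have equal enabled actions. -/
def IsPOMDP [Fintype S] [Fintype Act] (O : S → Z) (P : S → Act → S → ℝ) : Prop :=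
  (∀ s α s', 0 ≤ P s α s') ∧
  (∀ s α, (∑ s', P s α s') = 0 ∨ (∑ s', P s α s') = 1) ∧
  (∀ s, (enabledA P s).Nonempty) ∧
  (∀ s s', O s = O s' → enabledA P s = enabledA P s')

/-- `b` has observation `z`: the support of `b` is contained in `O⁻¹(z)`. -/
def HasObs (O : S → Z) (b : S → ℝ) (z : Z) : Prop :=
  ∀ s, 0 < b s → O s = z

/-- `P(s,α,z)`: probability to observe `z` after taking `α` in state `s`. -/
def Pso [Fintype S] (O : S → Z) (P : S → Act → S → ℝ) (s : S) (α : Act) (z : Z) : ℝ :=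
  ∑ s' : S, if O s' = z then P s α s' else 0

/-- `P(b,α,z)`: probability to observe `z` after taking `α` in belief `b`. -/
def Pbo [Fintype S] (O : S → Z) (P : S → Act → S → ℝ) (b : S → ℝ) (α : Act) (z : Z) : ℝ :=
  ∑ s : S, b s * Pso O P s α z

/-- The successor belief `⟦b|α,z⟧`. -/
def succB [Fintype S] (O : S → Z) (P : S → Act → S → ℝ) (b : S → ℝ) (α : Act) (z : Z) :
    S → ℝ :=
  fun s => if O s = z then (∑ s' : S, b s' * P s' α s) / Pbo O P b α z else 0

/-- The belief reward `R(b,α,z)`. -/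
def Rbel [Fintype S] (O : S → Z) (P R : S → Act → S → ℝ) (b : S → ℝ) (α : Act) (z : Z) : ℝ :=
  (∑ s : S, b s * ∑ s' : S, if O s' = z then R s α s' * P s α s' else 0) / Pbo O P b α z

/-- The last observation of a finite observation trace `z₀ α₁ z₁ … αₙ zₙ`,
represented as the pair of `z₀` and the list `[(α₁,z₁),…,(αₙ,zₙ)]`. -/
def lastObs (τ : Z × List (Act × Z)) : Z :=
  (τ.2.getLast?.map Prod.snd).getD τ.1

/-- An observation-based policy: to each finite observation trace it assigns a probability
distribution over actions supported on the actions enabled at the last observation. -/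
def IsObsPolicy [Fintype S] [Fintype Act] (O : S → Z) (P : S → Act → S → ℝ)
    (σ : Z × List (Act × Z) → Act → ℝ) : Prop :=
  ∀ τ, (∀ α, 0 ≤ σ τ α) ∧ (∑ α, σ τ α = 1) ∧
    (∀ α, σ τ α ≠ 0 → ∀ s, O s = lastObs τ → α ∈ enabledA P s)

/-- The shifted policy `σ⇝(z,α)`, behaving as `σ` after observing `z` and taking `α`. -/
def shiftPol (σ : Z × List (Act × Z) → Act → ℝ) (z : Z) (α : Act) :
    Z × List (Act × Z) → Act → ℝ :=
  fun τ => σ (z, (α, τ.1) :: τ.2)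

/-- Goal states are observable: membership in `G` is determined by the observation. -/
def ObservableGoal (O : S → Z) (G : Set S) : Prop :=
  ∃ Z' : Set Z, ∀ s, s ∈ G ↔ O s ∈ Z'

/-- The `n`-step state values `W_n^σ` under an observation-based policy `σ`. -/
def Wval [Fintype S] [Fintype Act] (O : S → Z) (P R : S → Act → S → ℝ) (G : Set S) :
    ℕ → (Z × List (Act × Z) → Act → ℝ) → S → ℝ
  | 0, _, _ => 0
  | n+1, σ, s =>
    if s ∈ G then 0
    else ∑ α ∈ enabledA P s, σ (O s, []) α *
      ∑ s' : S, P s α s' * (R s α s' + Wval O P R G n (shiftPol σ (O s) α) s')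

/-- The `n`-step belief values `V_n^σ(b)` under policy `σ`, for a belief `b` with
observation `z`. -/
def Vpol [Fintype S] [Fintype Act] [Fintype Z] (O : S → Z) (P R : S → Act → S → ℝ)
    (G : Set S) :
    ℕ → (Z × List (Act × Z) → Act → ℝ) → (S → ℝ) → Z → ℝ
  | 0, _, _, _ => 0
  | n+1, σ, b, z =>
    if ∀ s, 0 < b s → s ∈ G then 0
    else ∑ α ∈ obsEnabled O P z, σ (z, []) α *
      ∑ z' ∈ univ.filter (fun z' => 0 < Pbo O P b α z'),
        Pbo O P b α z' *
          (Rbel O P R b α z' + Vpol O P R G n (shiftPol σ z α) (succB O P b α z') z')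

/-- Maximum of `f` over a finite set (0 for the empty set). -/
def maxOver {α : Type} (t : Finset α) (f : α → ℝ) : ℝ :=
  if h : t.Nonempty then t.sup' h f else 0

/-- Minimum of `f` over a finite set (0 for the empty set). -/
def minOver {α : Type} (t : Finset α) (f : α → ℝ) : ℝ :=
  if h : t.Nonempty then t.inf' h f else 0

/-- The `n`-step optimal belief values `V_n(b)`, for a belief `b` with observation `z`. -/
def Vopt [Fintype S] [Fintype Act] [Fintype Z] (O : S → Z) (P R : S → Act → S → ℝ)
    (G : Set S) :
    ℕ → (S → ℝ) → Z → ℝ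
  | 0, _, _ => 0
  | n+1, b, z =>
    if ∀ s, 0 < b s → s ∈ G then 0
    else maxOver (obsEnabled O P z) fun α =>
      ∑ z' ∈ univ.filter (fun z' => 0 < Pbo O P b α z'),
        Pbo O P b α z' * (Rbel O P R b α z' + Vopt O P R G n (succB O P b α z') z')

/-- The `n`-step minimal values `U_n` on the underlying fully observable MDP. -/
def Umin [Fintype S] [Fintype Act] (P R : S → Act → S → ℝ) (G : Set S) : ℕ → S → ℝ
  | 0, _ => 0
  | n+1, s =>
    if s ∈ G then 0
    else minOver (enabledA P s) fun α =>
      ∑ s' : S, P s α s' * (R s α s' + Umin P R G n s')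

end


noncomputable section Aux

variable {S Act Z : Type} [Fintype S] [Fintype Act] [Fintype Z] [Nonempty Act]

/-- Default enabled action at observation `z`. -/
def pick (O : S → Z) (P : S → Act → S → ℝ) (z : Z) : Act :=
  if h : (obsEnabled O P z).Nonempty then h.choose else Classical.arbitrary Act

/-- Dirac distribution on an action. -/
def polDist (A : Act) : Act → ℝ := fun α => if α = A then 1 else 0

/-- The function maximized in the Bellman optimality step. -/
def fOpt (O : S → Z) (P R : S → Act → S → ℝ) (G : Set S) (n : ℕ) (b : S → ℝ) :
    Act → ℝ := fun α =>
  ∑ z' ∈ univ.filter (fun z' => 0 < Pbo O P b α z'),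
    Pbo O P b α z' * (Rbel O P R b α z' + Vopt O P R G n (succB O P b α z') z')

/-- A maximizing action. -/
def bestAct (O : S → Z) (P R : S → Act → S → ℝ) (G : Set S) (n : ℕ) (b : S → ℝ)
    (z : Z) : Act :=
  if h : (obsEnabled O P z).Nonempty then
    (Finset.exists_mem_eq_sup' h (fOpt O P R G n b)).choose
  else pick O P z

/-- An optimal observation-based policy for horizon `n`, initial belief `b`, observation `z`. -/
def optPol (O : S → Z) (P R : S → Act → S → ℝ) (G : Set S) :
    ℕ → (S → ℝ) → Z → (Z × List (Act × Z) → Act → ℝ)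
  | 0, _, _ => fun τ => polDist (pick O P (lastObs τ))
  | n+1, b, z => fun τ =>
    match τ with
    | (z₀, []) =>
        if z₀ = z then polDist (bestAct O P R G n b z) else polDist (pick O P z₀)
    | (z₀, (α₁, z₁) :: rest) =>
        if z₀ = z ∧ α₁ = bestAct O P R G n b z then
          optPol O P R G n (succB O P b α₁ z₁) z₁ (z₁, rest)
        else polDist (pick O P (lastObs (z₀, (α₁, z₁) :: rest)))

variable (O : S → Z) (P R : S → Act → S → ℝ) (G : Set S)

lemma lastObs_cons (z₀ z₁ : Z) (α : Act) (rest : List (Act × Z)) :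
    lastObs (z₀, (α, z₁) :: rest) = lastObs ((z₁, rest) : Z × List (Act × Z)) := by
  cases rest with
  | nil => simp [lastObs]
  | cons p l =>
      simp only [lastObs, List.getLast?_cons_cons]
      rcases h : (p :: l).getLast? with _ | q
      · simp [List.getLast?_eq_none_iff] at h
      · simp

lemma lastObs_nil (z₀ : Z) : lastObs ((z₀, []) : Z × List (Act × Z)) = z₀ := rfl

lemma obsEnabled_eq (hM : IsPOMDP O P) {s : S} {z : Z} (hs : O s = z) :
    obsEnabled O P z = enabledA P s := by
  have h : ∃ s', O s' = z := ⟨s, hs⟩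
  rw [obsEnabled, dif_pos h]
  exact (hM.2.2.2 _ _ (h.choose_spec.trans hs.symm)).symm ▸
    hM.2.2.2 h.choose s (h.choose_spec.trans hs.symm)

lemma obsEnabled_nonempty (hM : IsPOMDP O P) {z : Z} (h : ∃ s, O s = z) :
    (obsEnabled O P z).Nonempty := by
  rw [obsEnabled, dif_pos h]; exact hM.2.2.1 _

lemma obsEnabled_empty {z : Z} (h : ¬ ∃ s, O s = z) : obsEnabled O P z = ∅ :=
  dif_neg h

lemma pick_mem {z : Z} (h : (obsEnabled O P z).Nonempty) :
    pick O P z ∈ obsEnabled O P z := by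
  rw [pick, dif_pos h]; exact h.choose_spec

lemma pick_enabled (hM : IsPOMDP O P) {z : Z} {s : S} (hs : O s = z) :
    pick O P z ∈ enabledA P s := by
  have h := obsEnabled_nonempty O P hM ⟨s, hs⟩
  have := pick_mem O P h
  rwa [obsEnabled_eq O P hM hs] at this

lemma bestAct_mem {n : ℕ} {b : S → ℝ} {z : Z} (h : (obsEnabled O P z).Nonempty) :
    bestAct O P R G n b z ∈ obsEnabled O P z := by
  rw [bestAct, dif_pos h]; exact (Finset.exists_mem_eq_sup' h _).choose_spec.1

lemma bestAct_spec {n : ℕ} {b : S → ℝ} {z : Z} (h : (obsEnabled O P z).Nonempty) :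
    (obsEnabled O P z).sup' h (fOpt O P R G n b) =
      fOpt O P R G n b (bestAct O P R G n b z) := by
  rw [bestAct, dif_pos h]; exact (Finset.exists_mem_eq_sup' h _).choose_spec.2

lemma bestAct_enabled (hM : IsPOMDP O P) {n : ℕ} {b : S → ℝ} {z : Z} {s : S}
    (hs : O s = z) : bestAct O P R G n b z ∈ enabledA P s := by
  have h := obsEnabled_nonempty O P hM ⟨s, hs⟩
  have := bestAct_mem O P R G (n := n) (b := b) h
  rwa [obsEnabled_eq O P hM hs] at this

lemma polDist_nonneg (A α : Act) : 0 ≤ polDist A α := by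
  by_cases h : α = A <;> simp [polDist, h]

lemma polDist_sum (A : Act) : ∑ α, polDist A α = 1 := by
  simp [polDist]

lemma polDist_support {A α : Act} (h : polDist A α ≠ 0) : α = A := by
  by_contra hc; simp [polDist, hc] at h

lemma shift_policy {σ : Z × List (Act × Z) → Act → ℝ} (hσ : IsObsPolicy O P σ)
    (z : Z) (α : Act) : IsObsPolicy O P (shiftPol σ z α) := by
  intro τ
  obtain ⟨h1, h2, h3⟩ := hσ (z, (α, τ.1) :: τ.2)
  refine ⟨h1, h2, fun β hβ s hs => h3 β hβ s ?_⟩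
  have : lastObs (z, (α, τ.1) :: τ.2) = lastObs τ := lastObs_cons z τ.1 α τ.2
  rw [this]; exact hs

lemma optPol_policy (hM : IsPOMDP O P) :
    ∀ (n : ℕ) (b : S → ℝ) (z : Z), IsObsPolicy O P (optPol O P R G n b z) := by
  intro n
  induction n with
  | zero =>
      intro b z τ
      refine ⟨fun α => polDist_nonneg _ _, polDist_sum _, fun α hα s hs => ?_⟩
      have hA := polDist_support hα
      rw [hA]; exact pick_enabled O P hM hs
  | succ n ih =>
      intro b z τ
      obtain ⟨z₀, l⟩ := τ
      cases l with
      | nil =>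
          by_cases h : z₀ = z
          · subst h
            simp only [optPol, if_pos rfl]
            refine ⟨fun α => polDist_nonneg _ _, polDist_sum _, fun α hα s hs => ?_⟩
            have hA := polDist_support hα
            rw [hA]; exact bestAct_enabled O P R G hM hs
          · simp only [optPol, if_neg h]
            refine ⟨fun α => polDist_nonneg _ _, polDist_sum _, fun α hα s hs => ?_⟩
            have hA := polDist_support hα
            rw [hA]; exact pick_enabled O P hM hs
      | cons p rest =>
          obtain ⟨α₁, z₁⟩ := p
          by_cases h : z₀ = z ∧ α₁ = bestAct O P R G n b z
          · simp only [optPol, if_pos h]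
            obtain ⟨h1, h2, h3⟩ := ih (succB O P b α₁ z₁) z₁ (z₁, rest)
            refine ⟨h1, h2, fun α hα s hs => ?_⟩
            rw [lastObs_cons] at hs
            exact h3 α hα s hs
          · simp only [optPol, if_neg h]
            refine ⟨fun α => polDist_nonneg _ _, polDist_sum _, fun α hα s hs => ?_⟩
            have hA := polDist_support hα
            rw [hA]; exact pick_enabled O P hM hs

lemma Vpol_zero (σ : Z × List (Act × Z) → Act → ℝ) (b : S → ℝ) (z : Z) :
    Vpol O P R G 0 σ b z = 0 := rfl

lemma Vpol_succ (n : ℕ) (σ : Z × List (Act × Z) → Act → ℝ) (b : S → ℝ) (z : Z) :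
    Vpol O P R G (n+1) σ b z =
      if ∀ s, 0 < b s → s ∈ G then 0
      else ∑ α ∈ obsEnabled O P z, σ (z, []) α *
        ∑ z' ∈ univ.filter (fun z' => 0 < Pbo O P b α z'),
          Pbo O P b α z' *
            (Rbel O P R b α z' +
              Vpol O P R G n (shiftPol σ z α) (succB O P b α z') z') := rfl

lemma Vopt_zero (b : S → ℝ) (z : Z) : Vopt O P R G 0 b z = 0 := rfl

lemma Vopt_succ (n : ℕ) (b : S → ℝ) (z : Z) :
    Vopt O P R G (n+1) b z =
      if ∀ s, 0 < b s → s ∈ G then 0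
      else maxOver (obsEnabled O P z) (fOpt O P R G n b) := rfl

lemma Vpol_congr : ∀ (n : ℕ) (σ σ' : Z × List (Act × Z) → Act → ℝ) (b : S → ℝ) (z : Z),
    (∀ l, σ (z, l) = σ' (z, l)) →
    Vpol O P R G n σ b z = Vpol O P R G n σ' b z := by
  intro n
  induction n with
  | zero => intros; rfl
  | succ n ih =>
      intro σ σ' b z h
      rw [Vpol_succ, Vpol_succ]
      by_cases hg : ∀ s, 0 < b s → s ∈ G
      · rw [if_pos hg, if_pos hg]
      · rw [if_neg hg, if_neg hg]
        refine Finset.sum_congr rfl fun α _ => ?_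
        have hshift : shiftPol σ z α = shiftPol σ' z α :=
          funext fun τ => h ((α, τ.1) :: τ.2)
        rw [congrFun (h []) α, hshift]

lemma Pso_nonneg (hM : IsPOMDP O P) (s : S) (α : Act) (z : Z) :
    0 ≤ Pso O P s α z :=
  Finset.sum_nonneg fun s' _ => by
    by_cases h : O s' = z <;> simp [Pso, h, hM.1 s α s']

lemma Pbo_nonneg (hM : IsPOMDP O P) {b : S → ℝ} (hb : ∀ s, 0 ≤ b s) (α : Act) (z : Z) :
    0 ≤ Pbo O P b α z :=
  Finset.sum_nonneg fun s _ => mul_nonneg (hb s) (Pso_nonneg O P hM s α z)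

lemma succB_nonneg (hM : IsPOMDP O P) {b : S → ℝ} (hb : ∀ s, 0 ≤ b s) (α : Act) (z : Z)
    (s : S) : 0 ≤ succB O P b α z s := by
  unfold succB
  split
  · exact div_nonneg (Finset.sum_nonneg fun s' _ => mul_nonneg (hb s') (hM.1 s' α s))
      (Pbo_nonneg O P hM hb α z)
  · exact le_refl 0

lemma sum_policy_obsEnabled (hM : IsPOMDP O P) {σ : Z × List (Act × Z) → Act → ℝ}
    (hσ : IsObsPolicy O P σ) {z : Z} {s : S} (hs : O s = z) :
    ∑ α ∈ obsEnabled O P z, σ (z, []) α = 1 := by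
  obtain ⟨h1, h2, h3⟩ := hσ (z, [])
  have heq : ∑ α ∈ obsEnabled O P z, σ (z, []) α = ∑ α, σ (z, []) α := by
    refine Finset.sum_subset (Finset.subset_univ _) fun α _ hα => ?_
    by_contra hne
    exact hα ((obsEnabled_eq O P hM hs) ▸ h3 α hne s hs)
  rw [heq, h2]

lemma Vpol_le_Vopt (hM : IsPOMDP O P) :
    ∀ (n : ℕ) (σ : Z × List (Act × Z) → Act → ℝ) (b : S → ℝ) (z : Z),
      IsObsPolicy O P σ → (∀ s : S, 0 ≤ b s) →
      Vpol O P R G n σ b z ≤ Vopt O P R G n b z := by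
  intro n
  induction n with
  | zero => intros; exact le_refl 0
  | succ n ih =>
      intro σ b z hσ hb
      rw [Vpol_succ, Vopt_succ]
      by_cases hg : ∀ s, 0 < b s → s ∈ G
      · rw [if_pos hg, if_pos hg]
      · rw [if_neg hg, if_neg hg]
        by_cases hz : ∃ s, O s = z
        · obtain ⟨s₀, hs₀⟩ := hz
          have ht : (obsEnabled O P z).Nonempty := obsEnabled_nonempty O P hM ⟨s₀, hs₀⟩
          rw [maxOver, dif_pos ht]
          calc
            ∑ α ∈ obsEnabled O P z, σ (z, []) α *
                ∑ z' ∈ univ.filter (fun z' => 0 < Pbo O P b α z'),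
                  Pbo O P b α z' *
                    (Rbel O P R b α z' +
                      Vpol O P R G n (shiftPol σ z α) (succB O P b α z') z')
              ≤ ∑ α ∈ obsEnabled O P z, σ (z, []) α * fOpt O P R G n b α := by
                refine Finset.sum_le_sum fun α _ => ?_
                refine mul_le_mul_of_nonneg_left ?_ ((hσ (z, [])).1 α)
                refine Finset.sum_le_sum fun z' hz' => ?_
                have hp : 0 < Pbo O P b α z' := (Finset.mem_filter.1 hz').2
                refine mul_le_mul_of_nonneg_left ?_ hp.le
                exact add_le_add le_rfl
                  (ih (shiftPol σ z α) (succB O P b α z') z'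
                    (shift_policy O P hσ z α) (succB_nonneg O P hM hb α z'))
            _ ≤ ∑ α ∈ obsEnabled O P z, σ (z, []) α *
                  (obsEnabled O P z).sup' ht (fOpt O P R G n b) := by
                refine Finset.sum_le_sum fun α hα => ?_
                exact mul_le_mul_of_nonneg_left (Finset.le_sup' _ hα) ((hσ (z, [])).1 α)
            _ = (obsEnabled O P z).sup' ht (fOpt O P R G n b) := by
                rw [← Finset.sum_mul, sum_policy_obsEnabled O P hM hσ hs₀, one_mul]
        · rw [obsEnabled_empty O P hz]
          simp [maxOver]

lemma Vopt_eq_optPol (hM : IsPOMDP O P) :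
    ∀ (n : ℕ) (b : S → ℝ) (z : Z),
      Vopt O P R G n b z = Vpol O P R G n (optPol O P R G n b z) b z := by
  intro n
  induction n with
  | zero => intros; rfl
  | succ n ih =>
      intro b z
      rw [Vopt_succ, Vpol_succ]
      by_cases hg : ∀ s, 0 < b s → s ∈ G
      · rw [if_pos hg, if_pos hg]
      · rw [if_neg hg, if_neg hg]
        by_cases hz : (obsEnabled O P z).Nonempty
        · rw [maxOver, dif_pos hz, bestAct_spec O P R G hz]
          have hroot : ∀ α, optPol O P R G (n+1) b z (z, []) α =
              polDist (bestAct O P R G n b z) α := by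
            intro α; simp [optPol]
          have hagree : ∀ z' l,
              shiftPol (optPol O P R G (n+1) b z) z (bestAct O P R G n b z) (z', l) =
                optPol O P R G n (succB O P b (bestAct O P R G n b z) z') z' (z', l) := by
            intro z' l
            simp [shiftPol, optPol]
          have hstep : ∀ g : Act → ℝ,
              (∑ α ∈ obsEnabled O P z, optPol O P R G (n+1) b z (z, []) α * g α) =
                g (bestAct O P R G n b z) := by
            intro g
            have h1 : ∀ α ∈ obsEnabled O P z,
                optPol O P R G (n+1) b z (z, []) α * g α =
                  if α = bestAct O P R G n b z then g α else 0 := by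
              intro α _
              rw [hroot α]
              by_cases h : α = bestAct O P R G n b z <;> simp [polDist, h]
            rw [Finset.sum_congr rfl h1, Finset.sum_ite_eq' _ _ g,
              if_pos (bestAct_mem O P R G hz)]
          rw [hstep]
          unfold fOpt
          refine Finset.sum_congr rfl fun z' _ => ?_
          congr 1
          congr 1
          rw [ih (succB O P b (bestAct O P R G n b z) z') z']
          exact Vpol_congr O P R G n _ _ _ _ fun l => (hagree z' l).symm
        · rw [Finset.not_nonempty_iff_eq_empty.1 hz]
          simp [maxOver]

end Aux

/-- optimal `n`-step belief values are attained by observation-based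
policies, and hence equal the supremum over all observation-based policies. -/
theorem stmt_18 {S Act Z : Type} [Fintype S] [Nonempty S] [Fintype Act] [Nonempty Act]
    [Fintype Z] [Nonempty Z]
    (O : S → Z) (P : S → Act → S → ℝ) (hM : IsPOMDP O P)
    (R : S → Act → S → ℝ) (G : Set S) (hG : ObservableGoal O G) (n : ℕ)
    (b : S → ℝ) (z : Z) (hb : IsBelief b) (hobs : HasObs O b z) :
    (∃ σ : Z × List (Act × Z) → Act → ℝ, IsObsPolicy O P σ ∧
      Vopt O P R G n b z = Vpol O P R G n σ b z) ∧
    Vopt O P R G n b z =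
      sSup {x : ℝ | ∃ σ : Z × List (Act × Z) → Act → ℝ,
        IsObsPolicy O P σ ∧ x = Vpol O P R G n σ b z} := by
  have hex : ∃ σ : Z × List (Act × Z) → Act → ℝ, IsObsPolicy O P σ ∧
      Vopt O P R G n b z = Vpol O P R G n σ b z :=
    ⟨optPol O P R G n b z, optPol_policy O P R G hM n b z,
      Vopt_eq_optPol O P R G hM n b z⟩
  refine ⟨hex, ?_⟩
  have hmem : Vopt O P R G n b z ∈ {x : ℝ | ∃ σ : Z × List (Act × Z) → Act → ℝ,
      IsObsPolicy O P σ ∧ x = Vpol O P R G n σ b z} := hex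
  have hub : ∀ x ∈ {x : ℝ | ∃ σ : Z × List (Act × Z) → Act → ℝ,
      IsObsPolicy O P σ ∧ x = Vpol O P R G n σ b z}, x ≤ Vopt O P R G n b z := by
    rintro x ⟨σ, hσ, rfl⟩
    exact Vpol_le_Vopt O P R G hM n σ b z hσ hb.1
  exact le_antisymm (le_csSup ⟨_, hub⟩ hmem) (csSup_le ⟨_, hmem⟩ hub)
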